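/- Ergodic saddle-point bound: under the per-step bound L(sᵏ, y) − L(x, y^{k+1}) ≤ (1/σₖ)(D_Φ(z, zᵏ) − D_Φ(z, z^{k+1}) − (1−ρₖ)D_Φ(pᵏ, zᵏ)) with z = (x,y), D_Φ(z, ·) = D_ψ(x, ·) + D_φ(y, ·), and ρₖ < 1, the ergodic averages s̆ᴷ = ∑σₖsᵏ/∑σₖ and y̆ᴷ = ∑σₖy^{k+1}/∑σₖ satisfy L(s̆ᴷ, y) − L(x, y̆ᴷ) ≤ (D_ψ(x, x⁰) + D_φ(y, y⁰))/(∑_{k=0}^K σₖ) for every x ∈ dom ψ and y ∈ dom φ. -/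

import Mathlib

open scoped RealInnerProductSpace BigOperators

/-- Ergodic saddle-point bound: under the per-step primal–dual gap bound
`L(sᵏ, y) − L(x, y^{k+1}) ≤ (1/σₖ)(D(z, zᵏ) − D(z, z^{k+1}) − (1−ρₖ)Dₖ)` with
`D(z, ·) = D_ψ(x, ·) + D_φ(y, ·)` and `ρₖ < 1`, the ergodic averages
`s̆ᴷ = ∑σₖsᵏ/∑σₖ` and `y̆ᴷ = ∑σₖy^{k+1}/∑σₖ` satisfy
`L(s̆ᴷ, y) − L(x, y̆ᴷ) ≤ (D_ψ(x, x⁰) + D_φ(y, y⁰))/(∑_{k≤K} σₖ)` for every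
`x ∈ dom ψ` and `y ∈ dom φ`. -/
theorem stmt16 {E F : Type*} [NormedAddCommGroup E] [InnerProductSpace ℝ E]
    [NormedAddCommGroup F] [InnerProductSpace ℝ F]
    (L : E → F → ℝ) (Sψ : Set E) (Sφ : Set F)
    (hconv : ∀ y ∈ Sφ, ConvexOn ℝ Sψ (fun x => L x y))
    (hconc : ∀ x ∈ Sψ, ConcaveOn ℝ Sφ (fun y => L x y))
    (Dψ : E → E → ℝ) (Dφ : F → F → ℝ)
    (hDψ : ∀ u v : E, 0 ≤ Dψ u v) (hDφ : ∀ u v : F, 0 ≤ Dφ u v)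
    (s xs : ℕ → E) (yv ys : ℕ → F) (σ ρ : ℕ → ℝ)
    (hσ : ∀ k, 0 < σ k) (hρ : ∀ k, ρ k < 1)
    (Dp : ℕ → ℝ) (hDp : ∀ k, 0 ≤ Dp k)
    (hmem : ∀ k, s k ∈ Sψ ∧ yv k ∈ Sφ)
    (hstep : ∀ x ∈ Sψ, ∀ y ∈ Sφ, ∀ k : ℕ,
      L (s k) y - L x (yv k) ≤ (1 / σ k) *
        ((Dψ x (xs k) + Dφ y (ys k)) - (Dψ x (xs (k + 1)) + Dφ y (ys (k + 1))) -
          (1 - ρ k) * Dp k))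
    (K : ℕ) :
    ∀ x ∈ Sψ, ∀ y ∈ Sφ,
      L ((∑ k ∈ Finset.range (K + 1), σ k)⁻¹ •
            ∑ k ∈ Finset.range (K + 1), σ k • s k) y -
        L x ((∑ k ∈ Finset.range (K + 1), σ k)⁻¹ •
            ∑ k ∈ Finset.range (K + 1), σ k • yv k) ≤
        (Dψ x (xs 0) + Dφ y (ys 0)) / ∑ k ∈ Finset.range (K + 1), σ k := by
  intro x hx y hy
  set T := Finset.range (K + 1) with hT
  have hSpos : 0 < ∑ k ∈ T, σ k :=
    Finset.sum_pos (fun k _ => hσ k) ⟨0, Finset.mem_range.mpr (Nat.succ_pos K)⟩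
  set S : ℝ := ∑ k ∈ T, σ k with hS
  have hw : ∀ k ∈ T, (0:ℝ) ≤ σ k := fun k _ => (hσ k).le
  have h1 : L (S⁻¹ • ∑ k ∈ T, σ k • s k) y ≤ S⁻¹ * ∑ k ∈ T, σ k * L (s k) y := by
    have h := (hconv y hy).map_centerMass_le hw hSpos (fun k _ => (hmem k).1)
    rw [Finset.centerMass] at h
    refine h.trans_eq ?_
    simp [Finset.centerMass, Finset.smul_sum, smul_eq_mul, Finset.mul_sum, hS]
  have h2 : S⁻¹ * ∑ k ∈ T, σ k * L x (yv k) ≤ L x (S⁻¹ • ∑ k ∈ T, σ k • yv k) := by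
    have h := (hconc x hx).le_map_centerMass hw hSpos (fun k _ => (hmem k).2)
    rw [Finset.centerMass] at h
    refine le_trans ?_ h
    simp [Finset.centerMass, Finset.smul_sum, smul_eq_mul, Finset.mul_sum, hS]
  have hkey : ∀ k, σ k * (L (s k) y - L x (yv k)) ≤
      (Dψ x (xs k) + Dφ y (ys k)) - (Dψ x (xs (k + 1)) + Dφ y (ys (k + 1))) := by
    intro k
    have h := hstep x hx y hy k
    have hXe : σ k * ((1 / σ k) *
        ((Dψ x (xs k) + Dφ y (ys k)) - (Dψ x (xs (k + 1)) + Dφ y (ys (k + 1))) -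
          (1 - ρ k) * Dp k)) =
        ((Dψ x (xs k) + Dφ y (ys k)) - (Dψ x (xs (k + 1)) + Dφ y (ys (k + 1))) -
          (1 - ρ k) * Dp k) := by
      rw [one_div, ← mul_assoc, mul_inv_cancel₀ (hσ k).ne', one_mul]
    have h' := mul_le_mul_of_nonneg_left h (hσ k).le
    rw [hXe] at h'
    nlinarith [mul_nonneg (by linarith [hρ k] : (0:ℝ) ≤ 1 - ρ k) (hDp k)]
  have hsum : ∑ k ∈ T, σ k * (L (s k) y - L x (yv k)) ≤ Dψ x (xs 0) + Dφ y (ys 0) := by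
    calc ∑ k ∈ T, σ k * (L (s k) y - L x (yv k))
        ≤ ∑ k ∈ T, ((Dψ x (xs k) + Dφ y (ys k)) -
            (Dψ x (xs (k + 1)) + Dφ y (ys (k + 1)))) :=
          Finset.sum_le_sum fun k _ => hkey k
      _ = (Dψ x (xs 0) + Dφ y (ys 0)) - (Dψ x (xs (K + 1)) + Dφ y (ys (K + 1))) :=
          Finset.sum_range_sub' (fun k => Dψ x (xs k) + Dφ y (ys k)) (K + 1)
      _ ≤ Dψ x (xs 0) + Dφ y (ys 0) := by
          nlinarith [hDψ x (xs (K + 1)), hDφ y (ys (K + 1))]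
  calc L (S⁻¹ • ∑ k ∈ T, σ k • s k) y - L x (S⁻¹ • ∑ k ∈ T, σ k • yv k)
      ≤ S⁻¹ * ∑ k ∈ T, σ k * L (s k) y - S⁻¹ * ∑ k ∈ T, σ k * L x (yv k) :=
        sub_le_sub h1 h2
    _ = S⁻¹ * ∑ k ∈ T, σ k * (L (s k) y - L x (yv k)) := by
        rw [← mul_sub, ← Finset.sum_sub_distrib]
        congr 1
        exact Finset.sum_congr rfl fun k _ => (mul_sub _ _ _).symm
    _ ≤ S⁻¹ * (Dψ x (xs 0) + Dφ y (ys 0)) :=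
        mul_le_mul_of_nonneg_left hsum (inv_nonneg.mpr hSpos.le)
    _ = (Dψ x (xs 0) + Dφ y (ys 0)) / S := (div_eq_inv_mul _ _).symm
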